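/- Let T : D(T) ⊂ X → 2^{X*} be a monotone operator with nonempty domain, and define the Fitzpatrick function L_T(x,p) = sup{⟨p,y⟩ + ⟨q, x − y⟩ : (y,q) ∈ G(T)}. Then L_T is convex and lower semicontinuous on X × X*, and for every x ∈ D(T), Tx ⊂ ∂̄L_T(x) ∩ δL_T(x). -/

import Mathlib

open NormedSpace

/-- The Fitzpatrick function `L_T(x,p) = sup{⟨p,y⟩ + ⟨q, x − y⟩ : (y,q) ∈ G(T)}`. -/
noncomputable def Fitz {X : Type*} [NormedAddCommGroup X] [NormedSpace ℝ X]
    (T : X → Set (StrongDual ℝ X)) (z : X × StrongDual ℝ X) : EReal :=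
  ⨆ yq : {yq : X × StrongDual ℝ X // yq.2 ∈ T yq.1},
    ((z.2 yq.1.1 + yq.1.2 (z.1 - yq.1.1) : ℝ) : EReal)

/-- For a monotone operator `T` with nonempty domain, the
Fitzpatrick function `L_T` is convex and lower semicontinuous on `X × X*`, and
for every `x ∈ D(T)`, `Tx ⊆ ∂̄L_T(x) ∩ δL_T(x)`. -/
theorem stmt7 {X : Type*} [NormedAddCommGroup X] [NormedSpace ℝ X] [CompleteSpace X]
    (hrefl : Function.Surjective (NormedSpace.inclusionInDoubleDual ℝ X))
    (T : X → Set (StrongDual ℝ X))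
    (hmono : ∀ x y : X, ∀ p q : StrongDual ℝ X, p ∈ T x → q ∈ T y → 0 ≤ (p - q) (x - y))
    (hdom : ∃ x, (T x).Nonempty) :
    (∀ a b : X × StrongDual ℝ X, ∀ t : ℝ, 0 ≤ t → t ≤ 1 →
      Fitz T (t • a + (1 - t) • b) ≤ (t : EReal) * Fitz T a + ((1 - t : ℝ) : EReal) * Fitz T b) ∧
    LowerSemicontinuous (Fitz T) ∧
    (∀ x : X, ∀ p ∈ T x,
      Fitz T (x, p) = ((p x : ℝ) : EReal) ∧
      (∀ y q, Fitz T (x, p) + ((p (y - x) + (q - p) x : ℝ) : EReal) ≤ Fitz T (y, q))) := by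
  refine ⟨?_, ?_, ?_⟩
  · -- convexity
    intro a b t ht ht1
    refine iSup_le fun i => ?_
    obtain ⟨⟨y, q⟩, hq⟩ := i
    have key : ((t • a + (1 - t) • b).2 y + q ((t • a + (1 - t) • b).1 - y) : ℝ)
        = t * (a.2 y + q (a.1 - y)) + (1 - t) * (b.2 y + q (b.1 - y)) := by
      simp only [Prod.fst_add, Prod.snd_add, Prod.smul_fst, Prod.smul_snd,
        ContinuousLinearMap.add_apply, ContinuousLinearMap.smul_apply, smul_eq_mul,
        map_sub, map_add, map_smul]
      ring
    rw [key]
    push_cast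
    gcongr
    · exact (EReal.coe_add _ _).symm.trans_le (le_iSup (fun j : {yq : X × StrongDual ℝ X // yq.2 ∈ T yq.1} =>
        ((a.2 j.1.1 + j.1.2 (a.1 - j.1.1) : ℝ) : EReal)) ⟨(y, q), hq⟩)
    · rw [← EReal.coe_one, ← EReal.coe_sub]
      exact EReal.coe_nonneg.2 (by linarith)
    · exact (EReal.coe_add _ _).symm.trans_le (le_iSup (fun j : {yq : X × StrongDual ℝ X // yq.2 ∈ T yq.1} =>
        ((b.2 j.1.1 + j.1.2 (b.1 - j.1.1) : ℝ) : EReal)) ⟨(y, q), hq⟩)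
  · -- lower semicontinuity
    intro z c hc
    rw [Fitz, gt_iff_lt, lt_iSup_iff] at hc
    obtain ⟨i, hi⟩ := hc
    have hcont : Continuous fun w : X × StrongDual ℝ X =>
        ((w.2 i.1.1 + i.1.2 (w.1 - i.1.1) : ℝ) : EReal) := by
      apply continuous_coe_real_ereal.comp
      exact ((ContinuousLinearMap.apply ℝ ℝ i.1.1).continuous.comp continuous_snd).add
        (i.1.2.continuous.comp (continuous_fst.sub continuous_const))
    filter_upwards [(hcont.tendsto z).eventually (eventually_gt_nhds hi)] with w hw
    exact hw.trans_le (le_iSup (fun j : {yq : X × StrongDual ℝ X // yq.2 ∈ T yq.1} =>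
      ((w.2 j.1.1 + j.1.2 (w.1 - j.1.1) : ℝ) : EReal)) i)
  · -- subgradient property
    intro x p hp
    have heq : Fitz T (x, p) = ((p x : ℝ) : EReal) := by
      refine le_antisymm (iSup_le fun i => ?_) ?_
      · obtain ⟨⟨y, q⟩, hq⟩ := i
        have := hmono x y p q hp hq
        simp only [ContinuousLinearMap.sub_apply, map_sub] at this ⊢
        exact EReal.coe_le_coe_iff.2 (by linarith)
      · refine le_trans (le_of_eq ?_) (le_iSup (fun j : {yq : X × StrongDual ℝ X // yq.2 ∈ T yq.1} =>
          (((x, p).2 j.1.1 + j.1.2 ((x, p).1 - j.1.1) : ℝ) : EReal)) ⟨(x, p), hp⟩)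
        simp
    refine ⟨heq, fun y q => ?_⟩
    rw [heq]
    have hle := le_iSup (fun j : {yq : X × StrongDual ℝ X // yq.2 ∈ T yq.1} =>
      (((y, q).2 j.1.1 + j.1.2 ((y, q).1 - j.1.1) : ℝ) : EReal)) ⟨(x, p), hp⟩
    refine le_trans ?_ hle
    rw [← EReal.coe_add]
    apply EReal.coe_le_coe_iff.2
    simp only [ContinuousLinearMap.sub_apply, map_sub]
    linarith
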